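/- Let M be a nonnegative square real matrix admitting an equitable partition with equitable quotient matrix B (each block of M has constant row sums, recorded in B), and suppose B is irreducible. Then the spectral radius of M equals the spectral radius of B. -/

import Mathlib

open Matrix Polynomial Filter
open scoped ENNReal NNReal

section Aux

variable {m : Type*} [Fintype m] [DecidableEq m]

private lemma scalarMulVec (μ : ℂ) (v : m → ℂ) : Matrix.scalar m μ *ᵥ v = μ • v := by
  ext i
  simp [Matrix.scalar_apply, Matrix.mulVec_diagonal]

private lemma charpolyEvalEq (A : Matrix m m ℂ) (μ : ℂ) :
    A.charpoly.eval μ = (Matrix.scalar m μ - A).det := by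
  rw [Matrix.charpoly, eval_det, matPolyEquiv_charmatrix]
  simp

private lemma charpolyIsRootIff (A : Matrix m m ℂ) (μ : ℂ) :
    A.charpoly.IsRoot μ ↔ ∃ v, v ≠ 0 ∧ A *ᵥ v = μ • v := by
  rw [IsRoot, charpolyEvalEq, ← Matrix.exists_mulVec_eq_zero_iff]
  constructor
  · rintro ⟨v, hv, hv2⟩
    refine ⟨v, hv, ?_⟩
    rw [sub_mulVec, scalarMulVec] at hv2
    linear_combination (norm := module) -hv2
  · rintro ⟨v, hv, hv2⟩
    exact ⟨v, hv, by rw [sub_mulVec, scalarMulVec, hv2, sub_self]⟩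

private lemma memSpectrumIffIsRoot (A : Matrix m m ℂ) (μ : ℂ) :
    μ ∈ spectrum ℂ A ↔ A.charpoly.IsRoot μ := by
  rw [spectrum.mem_iff, IsRoot, charpolyEvalEq]
  have : algebraMap ℂ (Matrix m m ℂ) μ = Matrix.scalar m μ := by
    rw [Matrix.algebraMap_eq_diagonal, Matrix.scalar_apply]
    rfl
  rw [this, Matrix.isUnit_iff_isUnit_det, isUnit_iff_ne_zero, not_ne_iff]

end Aux

/-- The spectral radius of a real matrix: the supremum of the moduli of its
complex eigenvalues (roots of the characteristic polynomial over `ℂ`). -/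
noncomputable def specRad {m : Type*} [Fintype m] [DecidableEq m]
    (M : Matrix m m ℝ) : ℝ :=
  sSup {r : ℝ | ∃ μ : ℂ, (M.map Complex.ofReal).charpoly.IsRoot μ ∧ r = ‖μ‖}

section Aux2

variable {m : Type*} [Fintype m] [DecidableEq m]

private lemma specRadSetEq (A : Matrix m m ℝ) :
    {r : ℝ | ∃ μ : ℂ, (A.map Complex.ofReal).charpoly.IsRoot μ ∧ r = ‖μ‖}
      = (fun μ : ℂ => ‖μ‖) '' {μ : ℂ | (A.map Complex.ofReal).charpoly.IsRoot μ} := by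
  ext r
  simp [Set.mem_image, eq_comm]

private lemma rootsFinite (A : Matrix m m ℝ) :
    {μ : ℂ | (A.map Complex.ofReal).charpoly.IsRoot μ}.Finite :=
  Polynomial.finite_setOf_isRoot (A.map Complex.ofReal).charpoly_monic.ne_zero

private lemma rootsNonempty [Nonempty m] (A : Matrix m m ℝ) :
    {μ : ℂ | (A.map Complex.ofReal).charpoly.IsRoot μ}.Nonempty := by
  obtain ⟨μ, h⟩ := IsAlgClosed.exists_root (A.map Complex.ofReal).charpoly
    (by rw [Matrix.charpoly_degree_eq_dim]
        exact_mod_cast Nat.cast_ne_zero.mpr Fintype.card_ne_zero)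
  exact ⟨μ, h⟩

private lemma specRadEmpty [IsEmpty m] (A : Matrix m m ℝ) : specRad A = 0 := by
  have h : {r : ℝ | ∃ μ : ℂ, (A.map Complex.ofReal).charpoly.IsRoot μ ∧ r = ‖μ‖} = ∅ := by
    ext r
    simp only [Set.mem_setOf_eq, Set.mem_empty_iff_false, iff_false, not_exists]
    rintro μ ⟨hroot, -⟩
    rw [IsRoot, charpolyEvalEq, Matrix.det_isEmpty] at hroot
    exact one_ne_zero hroot
  rw [specRad, h, Real.sSup_empty]

private lemma absLeSpecRad (A : Matrix m m ℝ) {μ : ℂ}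
    (h : (A.map Complex.ofReal).charpoly.IsRoot μ) : ‖μ‖ ≤ specRad A := by
  rw [specRad, specRadSetEq]
  exact le_csSup ((rootsFinite A).image _).bddAbove ⟨μ, h, rfl⟩

private lemma specRadNonneg [Nonempty m] (A : Matrix m m ℝ) : 0 ≤ specRad A := by
  obtain ⟨μ, hμ⟩ := rootsNonempty A
  exact (norm_nonneg μ).trans (absLeSpecRad A hμ)

private lemma spectralRadiusEqSpecRad [Nonempty m] (A : Matrix m m ℝ) :
    spectralRadius ℂ (A.map Complex.ofReal) = ENNReal.ofReal (specRad A) := by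
  apply le_antisymm
  · refine iSup₂_le fun μ hμ => ?_
    have hμR := (memSpectrumIffIsRoot (A.map Complex.ofReal) μ).mp hμ
    calc ((‖μ‖₊ : ℝ≥0∞)) = ENNReal.ofReal ‖μ‖ := by
          rw [ofReal_norm, enorm_eq_nnnorm]
      _ ≤ _ := ENNReal.ofReal_le_ofReal (absLeSpecRad A hμR)
  · have hEfin := (rootsFinite A).image (fun μ : ℂ => ‖μ‖)
    have hEne := (rootsNonempty A).image (fun μ : ℂ => ‖μ‖)
    obtain ⟨μ0, hμ0, habs⟩ := hEne.csSup_mem hEfin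
    rw [specRad, specRadSetEq, ← habs]
    have h1 : ENNReal.ofReal ‖μ0‖ = (‖μ0‖₊ : ℝ≥0∞) := by
      rw [ofReal_norm, enorm_eq_nnnorm]
    rw [h1]
    exact le_iSup₂ (f := fun k _ => ((‖k‖₊ : ℝ≥0∞))) μ0 ((memSpectrumIffIsRoot _ μ0).mpr hμ0)

private lemma specRadLe [Nonempty m] (A : Matrix m m ℝ) {d : ℝ}
    (h : ∀ μ : ℂ, (A.map Complex.ofReal).charpoly.IsRoot μ → ‖μ‖ ≤ d) :
    specRad A ≤ d := by
  rw [specRad, specRadSetEq]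
  refine csSup_le ((rootsNonempty A).image _) ?_
  rintro r ⟨μ, hμ, rfl⟩
  exact h μ hμ

end Aux2

attribute [local instance] Matrix.linftyOpNormedRing Matrix.linftyOpNormedAlgebra

theorem stmt10 (n t : ℕ) (M : Matrix (Fin n) (Fin n) ℝ) (B : Matrix (Fin t) (Fin t) ℝ)
    (hM : ∀ i j, 0 ≤ M i j)
    (π : Fin n → Fin t) (hsurj : Function.Surjective π)
    (hequitable : ∀ (a : Fin n) (j : Fin t),
      ∑ b ∈ Finset.univ.filter (fun b => π b = j), M a b = B (π a) j)
    (hirr : ∀ i j : Fin t, ∃ k : ℕ, 0 < (B ^ k) i j) :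
    specRad M = specRad B := by
  rcases isEmpty_or_nonempty (Fin t) with ht | ht
  · have hn : IsEmpty (Fin n) := ⟨fun a => ht.false (π a)⟩
    rw [specRadEmpty M, specRadEmpty B]
  · have hn : Nonempty (Fin n) := by
      obtain ⟨a, -⟩ := hsurj ht.some
      exact ⟨a⟩
    -- notation
    set Mc : Matrix (Fin n) (Fin n) ℂ := M.map Complex.ofReal with hMc
    set Bc : Matrix (Fin t) (Fin t) ℂ := B.map Complex.ofReal with hBc
    set S : Matrix (Fin n) (Fin t) ℝ := Matrix.of fun a j => if π a = j then 1 else 0 with hS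
    -- basic intertwining
    have h1 : M * S = S * B := by
      ext a j
      rw [Matrix.mul_apply, Matrix.mul_apply]
      have hl : ∑ b, M a b * S b j = B (π a) j := by
        rw [← hequitable a j, Finset.sum_filter]
        congr 1
        ext b
        simp [hS, mul_comm]
      have hr : ∑ i, S a i * B i j = B (π a) j := by
        simp [hS]
      rw [hl, hr]
    have h2 : ∀ k : ℕ, M ^ k * S = S * B ^ k := by
      intro k
      induction k with
      | zero => simp
      | succ k ih =>
        rw [pow_succ, pow_succ, Matrix.mul_assoc, h1, ← Matrix.mul_assoc, ih, Matrix.mul_assoc]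
    -- nonnegativity of powers
    have hB : ∀ i j, 0 ≤ B i j := by
      intro i j
      obtain ⟨a, rfl⟩ := hsurj i
      rw [← hequitable a j]
      exact Finset.sum_nonneg fun b _ => hM a b
    have hMk : ∀ (k : ℕ) a b, 0 ≤ (M ^ k) a b := by
      intro k
      induction k with
      | zero => intro a b; by_cases h : a = b <;> simp [Matrix.one_apply, h]
      | succ k ih =>
        intro a b
        rw [pow_succ, Matrix.mul_apply]
        exact Finset.sum_nonneg fun c _ => mul_nonneg (ih a c) (hM c b)
    have hBk : ∀ (k : ℕ) i j, 0 ≤ (B ^ k) i j := by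
      intro k
      induction k with
      | zero => intro i j; by_cases h : i = j <;> simp [Matrix.one_apply, h]
      | succ k ih =>
        intro i j
        rw [pow_succ, Matrix.mul_apply]
        exact Finset.sum_nonneg fun c _ => mul_nonneg (ih i c) (hB c j)
    -- row sums of powers
    have hrow : ∀ (k : ℕ) (a : Fin n), ∑ b, (M ^ k) a b = ∑ j, (B ^ k) (π a) j := by
      intro k a
      have := congrArg (fun C => ∑ j, C a j) (h2 k)
      simp only [Matrix.mul_apply] at this
      calc ∑ b, (M ^ k) a b = ∑ b, (M ^ k) a b * (∑ j, S b j) := by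
            apply Finset.sum_congr rfl
            intro b _
            simp [hS]
        _ = ∑ j, ∑ b, (M ^ k) a b * S b j := by
            rw [Finset.sum_comm]
            exact Finset.sum_congr rfl fun b _ => Finset.mul_sum _ _ _
        _ = ∑ j, ∑ i, S a i * (B ^ k) i j := this
        _ = ∑ j, (B ^ k) (π a) j := by
            apply Finset.sum_congr rfl
            intro j _
            simp [hS]
    -- complexified versions
    have hmapM : ∀ k : ℕ, Mc ^ k = (M ^ k).map Complex.ofReal := by
      intro k
      rw [hMc]
      exact (map_pow (Complex.ofRealHom.mapMatrix) M k).symm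
    have hmapB : ∀ k : ℕ, Bc ^ k = (B ^ k).map Complex.ofReal := by
      intro k
      rw [hBc]
      exact (map_pow (Complex.ofRealHom.mapMatrix) B k).symm
    -- norm equality of powers
    have hnorm : ∀ k : ℕ, ‖Mc ^ k‖₊ = ‖Bc ^ k‖₊ := by
      intro k
      rw [Matrix.linfty_opNNNorm_def, Matrix.linfty_opNNNorm_def]
      have hgen : ∀ a : Fin n, ∑ b, ‖(Mc ^ k) a b‖₊ = ∑ j, ‖(Bc ^ k) (π a) j‖₊ := by
        intro a
        apply NNReal.coe_injective
        push_cast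
        rw [hmapM, hmapB]
        simp only [Matrix.map_apply, Complex.norm_real, Real.norm_eq_abs]
        calc ∑ b, |(M ^ k) a b| = ∑ b, (M ^ k) a b := by
              exact Finset.sum_congr rfl fun b _ => abs_of_nonneg (hMk k a b)
          _ = ∑ j, (B ^ k) (π a) j := hrow k a
          _ = ∑ j, |(B ^ k) (π a) j| := by
              exact Finset.sum_congr rfl fun j _ => (abs_of_nonneg (hBk k (π a) j)).symm
      calc (Finset.univ.sup fun a => ∑ b, ‖(Mc ^ k) a b‖₊)
          = Finset.univ.sup fun a => ∑ j, ‖(Bc ^ k) (π a) j‖₊ := by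
            exact Finset.sup_congr rfl fun a _ => hgen a
        _ = Finset.univ.sup fun i => ∑ j, ‖(Bc ^ k) i j‖₊ := by
            have h5 := Finset.sup_image (Finset.univ) π (fun i => ∑ j, ‖(Bc ^ k) i j‖₊)
            rw [Finset.image_univ_of_surjective hsurj] at h5
            exact h5.symm
    -- key bound: every eigenvalue of M has modulus at most specRad B
    have hbound : ∀ μ : ℂ, Mc.charpoly.IsRoot μ → ‖μ‖ ≤ specRad B := by
      intro μ hroot
      obtain ⟨v, hv, hv2⟩ := (charpolyIsRootIff Mc μ).mp hroot
      have hvk : ∀ k : ℕ, (Mc ^ k) *ᵥ v = μ ^ k • v := by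
        intro k
        induction k with
        | zero => simp
        | succ k ih =>
          rw [pow_succ, pow_succ, ← Matrix.mulVec_mulVec, hv2, Matrix.mulVec_smul, ih,
            smul_smul, mul_comm μ]
      have hvne : ‖v‖₊ ≠ 0 := by simpa using hv
      have hpowle : ∀ k : ℕ, ‖μ‖₊ ^ k ≤ ‖Bc ^ k‖₊ := by
        intro k
        have h3 : ‖(Mc ^ k) *ᵥ v‖₊ ≤ ‖Mc ^ k‖₊ * ‖v‖₊ := Matrix.linfty_opNNNorm_mulVec _ _
        rw [hvk k, nnnorm_smul, nnnorm_pow] at h3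
        rw [← hnorm k]
        exact le_of_mul_le_mul_right h3 (zero_lt_iff.mpr hvne)
      have hgel := spectrum.pow_nnnorm_pow_one_div_tendsto_nhds_spectralRadius Bc
      have hle : (‖μ‖₊ : ℝ≥0∞) ≤ spectralRadius ℂ Bc := by
        refine ge_of_tendsto hgel ?_
        filter_upwards [eventually_ge_atTop 1] with k hk
        have hkne : (k : ℝ) ≠ 0 := Nat.cast_ne_zero.mpr (by omega)
        have hcoe : ((‖μ‖₊ : ℝ≥0∞)) ^ (k : ℕ) ≤ ((‖Bc ^ k‖₊ : ℝ≥0∞)) := by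
          rw [← ENNReal.coe_pow]
          exact ENNReal.coe_le_coe.mpr (hpowle k)
        calc (‖μ‖₊ : ℝ≥0∞) = ((‖μ‖₊ : ℝ≥0∞) ^ (k : ℕ)) ^ (1 / (k : ℝ)) := by
              rw [← ENNReal.rpow_natCast, ← ENNReal.rpow_mul, mul_one_div,
                div_self hkne, ENNReal.rpow_one]
          _ ≤ (‖Bc ^ k‖₊ : ℝ≥0∞) ^ (1 / (k : ℝ)) :=
              ENNReal.rpow_le_rpow hcoe (by positivity)
      rw [spectralRadiusEqSpecRad B] at hle
      have h6 : ENNReal.ofReal ‖μ‖ ≤ ENNReal.ofReal (specRad B) := by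
        rw [ofReal_norm, enorm_eq_nnnorm]
        exact hle
      exact (ENNReal.ofReal_le_ofReal_iff (specRadNonneg B)).mp h6
    -- direction 1 : specRad M ≤ specRad B
    have hMB : specRad M ≤ specRad B := specRadLe M hbound
    -- direction 2 : specRad B ≤ specRad M
    have hBM : specRad B ≤ specRad M := by
      refine specRadLe B fun μ hμ => ?_
      obtain ⟨v, hv, hv2⟩ := (charpolyIsRootIff Bc μ).mp hμ
      set Sc : Matrix (Fin n) (Fin t) ℂ := S.map Complex.ofReal with hSc
      have h1c : Mc * Sc = Sc * Bc := by
        have hco : (Complex.ofReal : ℝ → ℂ) = ⇑Complex.ofRealHom := rfl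
        rw [hMc, hBc, hSc, hco, ← Matrix.map_mul, ← Matrix.map_mul, h1]
      have hu2 : Mc *ᵥ (Sc *ᵥ v) = μ • (Sc *ᵥ v) := by
        rw [Matrix.mulVec_mulVec, h1c, ← Matrix.mulVec_mulVec, hv2, Matrix.mulVec_smul]
      have hSv : Sc *ᵥ v = fun a => v (π a) := by
        ext a
        simp [hSc, hS, Matrix.mulVec, dotProduct, Matrix.map_apply,
          apply_ite Complex.ofReal, ite_mul]
      have hu : Sc *ᵥ v ≠ 0 := by
        rw [hSv]
        intro hzero
        apply hv
        ext i
        obtain ⟨a, rfl⟩ := hsurj i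
        exact congrFun hzero a
      have : Mc.charpoly.IsRoot μ := (charpolyIsRootIff Mc μ).mpr ⟨Sc *ᵥ v, hu, hu2⟩
      exact absLeSpecRad M this
    exact le_antisymm hMB hBM
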